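/- In a many-to-one market with responsive preferences, let μ and μ' be stable matchings and suppose student s strictly prefers μ'(s) to μ(s). Then s lies on a preference cycle s₀c₀s₁c₁…s_k c_k s₀ (alternating students and colleges, all distinct, each agent strictly preferring its successor to its predecessor) such that for every student s_i in the cycle, μ(s_i) is its predecessor and μ'(s_i) is its successor, and every college in the cycle is filled to its full capacity in both μ and μ'. -/

import Mathlib

set_option linter.unusedSectionVars false


/-! Many-to-one matching framework (students `S` and colleges `C`).

Each student has a strict preference order over `C ∪ {∅}` and each college a
strict (responsive) ranking of `S ∪ {∅}`, both encoded by injective rank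
functions into `ℕ` (larger = more preferred); `none` is the outside option.
A matching is a function `μ : S → Option C`; the set of students assigned to a
college is recovered by `assignedSet`. -/

variable {S C : Type*} [Fintype S] [DecidableEq S] [DecidableEq C]

def assignedSet (μ : S → Option C) (c : C) [Fintype S] [DecidableEq S] [DecidableEq C] :
    Finset S :=
  Finset.univ.filter (fun s => μ s = some c)

structure MPrefs (S C : Type*) where
  prS : S → Option C → ℕ
  prC : C → Option S → ℕ
  injS : ∀ s, Function.Injective (prS s)
  injC : ∀ c, Function.Injective (prC c)

def MIndivRational (P : MPrefs S C) (q : C → ℕ) (μ : S → Option C) : Prop :=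
  (∀ s c, μ s = some c → P.prS s none < P.prS s (some c) ∧ P.prC c none < P.prC c (some s)) ∧
  ∀ c, (assignedSet μ c).card ≤ q c

def MBlocks (P : MPrefs S C) (q : C → ℕ) (μ : S → Option C) (s : S) (c : C) : Prop :=
  P.prS s (μ s) < P.prS s (some c) ∧
  ((∃ s' ∈ assignedSet μ c, P.prC c (some s') < P.prC c (some s)) ∨
   (P.prC c none < P.prC c (some s) ∧ (assignedSet μ c).card < q c))

def MStable (P : MPrefs S C) (q : C → ℕ) (μ : S → Option C) : Prop :=
  MIndivRational P q μ ∧ ∀ s c, ¬ MBlocks P q μ s c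


section Aux

variable (P : MPrefs S C) (μ μ' : S → Option C)

/-- The set of students who strictly prefer `μ'` to `μ`. -/
def Timp : Finset S := Finset.univ.filter fun s => P.prS s (μ s) < P.prS s (μ' s)

lemma mem_Timp {P : MPrefs S C} {μ μ' : S → Option C} {s : S} :
    s ∈ Timp P μ μ' ↔ P.prS s (μ s) < P.prS s (μ' s) := by
  simp [Timp]

/-- Colleges receiving some improving student under `μ'`. -/
def Rset : Finset C := (Timp P μ μ').biUnion fun s => (μ' s).toFinset

lemma mem_Rset {P : MPrefs S C} {μ μ' : S → Option C} {c : C} :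
    c ∈ Rset P μ μ' ↔ ∃ s ∈ Timp P μ μ', μ' s = some c := by
  simp [Rset, Option.mem_toFinset, eq_comm]

variable {P μ μ'} {q : C → ℕ}

lemma mem_assignedSet {μ : S → Option C} {c : C} {b : S} :
    b ∈ assignedSet μ c ↔ μ b = some c := by simp [assignedSet]

lemma exists_col (hμ : MStable P q μ) {s : S} (hs : s ∈ Timp P μ μ') :
    ∃ c, μ' s = some c := by
  rw [mem_Timp] at hs
  cases hc' : μ' s with
  | some c => exact ⟨c, rfl⟩
  | none =>
    rw [hc'] at hs
    cases hc : μ s with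
    | none => rw [hc] at hs; exact absurd hs (lt_irrefl _)
    | some c =>
      have := (hμ.1.1 s c hc).1
      rw [hc] at hs
      omega

lemma full_and_pref (hμ : MStable P q μ) (hμ' : MStable P q μ')
    {s : S} {c : C} (hs : s ∈ Timp P μ μ') (hc : μ' s = some c) :
    (assignedSet μ c).card = q c ∧
      ∀ b ∈ assignedSet μ c, P.prC c (some s) < P.prC c (some b) := by
  rw [mem_Timp, hc] at hs
  have nb := hμ.2 s c
  rw [MBlocks] at nb
  push_neg at nb
  have hlikes : P.prC c none < P.prC c (some s) := (hμ'.1.1 s c hc).2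
  have hns : μ s ≠ some c := by
    intro he; rw [he] at hs; exact lt_irrefl _ hs
  have h2 := nb hs
  have hfull : (assignedSet μ c).card = q c := by
    have := hμ.1.2 c
    have := (h2.2 hlikes)
    omega
  refine ⟨hfull, fun b hb => ?_⟩
  have hne : P.prC c (some s) ≠ P.prC c (some b) := by
    intro he
    have : (some s : Option S) = some b := P.injC c he
    rw [mem_assignedSet] at hb
    exact hns (by rw [Option.some_inj.mp this]; exact hb)
  have := h2.1 b hb
  omega

lemma B_mem_Timp (hμ : MStable P q μ) (hμ' : MStable P q μ')
    {s : S} {c : C} (hs : s ∈ Timp P μ μ') (hc : μ' s = some c)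
    {b : S} (hb : b ∈ assignedSet μ c) (hb' : b ∉ assignedSet μ' c) :
    b ∈ Timp P μ μ' := by
  rw [mem_Timp, (mem_assignedSet.mp hb)]
  have hne : μ' b ≠ some c := fun he => hb' (mem_assignedSet.mpr he)
  have hneq : P.prS b (μ' b) ≠ P.prS b (some c) := fun he => hne (P.injS b he)
  rcases lt_or_gt_of_ne hneq with hlt | hgt
  · exfalso
    apply hμ'.2 b c
    refine ⟨hlt, Or.inl ⟨s, mem_assignedSet.mpr hc, ?_⟩⟩
    exact (full_and_pref hμ hμ' hs hc).2 b hb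
  · exact hgt

end Aux

section Aux2
variable {P : MPrefs S C} {μ μ' : S → Option C} {q : C → ℕ}

lemma mu'_full (hμ : MStable P q μ) (hμ' : MStable P q μ')
    {c : C} (hc : c ∈ Rset P μ μ') : (assignedSet μ' c).card = q c := by
  classical
  set R := Rset P μ μ' with hR
  have hXfull : ∀ c ∈ R, (assignedSet μ c).card = q c := by
    intro c hc
    obtain ⟨s, hs, hsc⟩ := mem_Rset.mp hc
    exact (full_and_pref hμ hμ' hs hsc).1
  set Xc : C → Finset S := fun c => assignedSet μ c \ assignedSet μ' c with hXc
  set Yc : C → Finset S := fun c => assignedSet μ' c \ assignedSet μ c with hYc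
  have hXY : R.biUnion Xc ⊆ R.biUnion Yc := by
    intro b hb
    obtain ⟨c', hc', hbc'⟩ := Finset.mem_biUnion.mp hb
    obtain ⟨s', hs', hsc'⟩ := mem_Rset.mp hc'
    rw [hXc] at hbc'
    obtain ⟨hb1, hb2⟩ := Finset.mem_sdiff.mp hbc'
    have hbT : b ∈ Timp P μ μ' := B_mem_Timp hμ hμ' hs' hsc' hb1 hb2
    obtain ⟨c'', hbc''⟩ := exists_col hμ hbT
    have hc''R : c'' ∈ R := mem_Rset.mpr ⟨b, hbT, hbc''⟩
    refine Finset.mem_biUnion.mpr ⟨c'', hc''R, Finset.mem_sdiff.mpr ⟨mem_assignedSet.mpr hbc'', ?_⟩⟩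
    intro hmem
    have h1 : μ b = some c' := mem_assignedSet.mp hb1
    have h2 : μ b = some c'' := mem_assignedSet.mp hmem
    rw [h1] at h2
    exact hb2 (mem_assignedSet.mpr (by rw [Option.some_inj.mp h2]; exact hbc''))
  have hdisjX : ∀ x ∈ R, ∀ y ∈ R, x ≠ y → Disjoint (Xc x) (Xc y) := by
    intro x _ y _ hxy
    rw [Finset.disjoint_left]
    intro a hax hay
    rw [hXc] at hax hay
    have h1 : μ a = some x := mem_assignedSet.mp (Finset.mem_sdiff.mp hax).1
    have h2 : μ a = some y := mem_assignedSet.mp (Finset.mem_sdiff.mp hay).1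
    rw [h1] at h2; exact hxy (Option.some_inj.mp h2)
  have hdisjY : ∀ x ∈ R, ∀ y ∈ R, x ≠ y → Disjoint (Yc x) (Yc y) := by
    intro x _ y _ hxy
    rw [Finset.disjoint_left]
    intro a hax hay
    rw [hYc] at hax hay
    have h1 : μ' a = some x := mem_assignedSet.mp (Finset.mem_sdiff.mp hax).1
    have h2 : μ' a = some y := mem_assignedSet.mp (Finset.mem_sdiff.mp hay).1
    rw [h1] at h2; exact hxy (Option.some_inj.mp h2)
  have hcardX : ∑ c ∈ R, (Xc c).card = (R.biUnion Xc).card := (Finset.card_biUnion hdisjX).symm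
  have hcardY : ∑ c ∈ R, (Yc c).card = (R.biUnion Yc).card := (Finset.card_biUnion hdisjY).symm
  have hle : ∑ c ∈ R, (Xc c).card ≤ ∑ c ∈ R, (Yc c).card := by
    rw [hcardX, hcardY]; exact Finset.card_le_card hXY
  have hXsum : ∀ c ∈ R, (Xc c).card + (assignedSet μ c ∩ assignedSet μ' c).card = q c := by
    intro c hc
    rw [hXc]
    simpa [Finset.card_sdiff_add_card_inter] using hXfull c hc
  have hYsum : ∀ c ∈ R, (Yc c).card + (assignedSet μ c ∩ assignedSet μ' c).card
      = (assignedSet μ' c).card := by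
    intro c _
    rw [hYc, Finset.inter_comm]
    exact Finset.card_sdiff_add_card_inter _ _
  have key : ∑ c ∈ R, q c ≤ ∑ c ∈ R, (assignedSet μ' c).card := by
    calc ∑ c ∈ R, q c = ∑ c ∈ R, ((Xc c).card + (assignedSet μ c ∩ assignedSet μ' c).card) :=
          (Finset.sum_congr rfl hXsum).symm
      _ = ∑ c ∈ R, (Xc c).card + ∑ c ∈ R, (assignedSet μ c ∩ assignedSet μ' c).card :=
          Finset.sum_add_distrib
      _ ≤ ∑ c ∈ R, (Yc c).card + ∑ c ∈ R, (assignedSet μ c ∩ assignedSet μ' c).card := by omega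
      _ = ∑ c ∈ R, ((Yc c).card + (assignedSet μ c ∩ assignedSet μ' c).card) :=
          Finset.sum_add_distrib.symm
      _ = ∑ c ∈ R, (assignedSet μ' c).card := Finset.sum_congr rfl hYsum
  have hptle : ∀ c ∈ R, (assignedSet μ' c).card ≤ q c := fun c _ => hμ'.1.2 c
  have heq : ∑ c ∈ R, (assignedSet μ' c).card = ∑ c ∈ R, q c :=
    le_antisymm (Finset.sum_le_sum hptle) key
  exact (Finset.sum_eq_sum_iff_of_le hptle).mp heq c hc

end Aux2

section Aux3
variable {P : MPrefs S C} {μ μ' : S → Option C} {q : C → ℕ}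

lemma exists_cycle (hμ : MStable P q μ) (hμ' : MStable P q μ')
    {s : S} (hs : s ∈ Timp P μ μ') :
    ∃ (p : ℕ) (ss : ℕ → S) (cs : ℕ → C), 0 < p ∧
      (∀ n, ss (n + p) = ss n) ∧
      (∀ a b, a < p → b < p → ss a = ss b → a = b) ∧
      (∀ n, μ (ss (n + 1)) = some (cs n)) ∧
      (∀ n, μ' (ss n) = some (cs n)) ∧
      (∀ n, ss n ∈ Timp P μ μ') ∧
      ss 0 = s := by
  classical
  obtain ⟨c0, _⟩ := exists_col hμ hs
  set colOf : S → C := fun a => (μ' a).getD c0 with hcolOf_def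
  have hcolOf : ∀ a ∈ Timp P μ μ', μ' a = some (colOf a) := by
    intro a ha
    obtain ⟨c, hc⟩ := exists_col hμ ha
    simp [hcolOf_def, hc]
  set Ac : C → Finset S := fun c => (Timp P μ μ').filter (fun a => μ' a = some c) with hAc
  set Bc : C → Finset S := fun c => assignedSet μ c \ assignedSet μ' c with hBc
  have hAmem : ∀ {a c}, a ∈ Ac c ↔ a ∈ Timp P μ μ' ∧ μ' a = some c := by
    intro a c; simp [hAc]
  have claim : ∀ c, ∃ g : S → S, Set.InjOn g ↑(Ac c) ∧ ∀ a ∈ Ac c, g a ∈ Bc c := by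
    intro c
    rcases (Ac c).eq_empty_or_nonempty with he | ⟨s₀, hs₀⟩
    · exact ⟨id, by simp [he], by simp [he]⟩
    · have hs₀T := (hAmem.mp hs₀).1
      have hs₀c := (hAmem.mp hs₀).2
      have hfull : (assignedSet μ c).card = q c := (full_and_pref hμ hμ' hs₀T hs₀c).1
      have hsub : Ac c ⊆ assignedSet μ' c \ assignedSet μ c := by
        intro a ha
        obtain ⟨haT, hac⟩ := hAmem.mp ha
        refine Finset.mem_sdiff.mpr ⟨mem_assignedSet.mpr hac, ?_⟩
        intro hmem
        have := mem_Timp.mp haT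
        rw [mem_assignedSet.mp hmem, hac] at this
        exact lt_irrefl _ this
      have hcard : (Ac c).card ≤ (Bc c).card := by
        have h1 := Finset.card_sdiff_add_card_inter (assignedSet μ c) (assignedSet μ' c)
        have h2 := Finset.card_sdiff_add_card_inter (assignedSet μ' c) (assignedSet μ c)
        rw [Finset.inter_comm] at h2
        have h3 : (assignedSet μ' c).card ≤ q c := hμ'.1.2 c
        have h4 := Finset.card_le_card hsub
        simp only [hBc]
        omega
      have : Nonempty (↥(Ac c) ↪ ↥(Bc c)) := by
        apply Function.Embedding.nonempty_of_card_le
        simpa [Fintype.card_coe] using hcard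
      obtain ⟨e⟩ := this
      refine ⟨fun a => if h : a ∈ Ac c then (e ⟨a, h⟩ : S) else a, ?_, ?_⟩
      · intro a ha b hb hab
        rw [Finset.mem_coe] at ha hb
        simp only [dif_pos ha, dif_pos hb] at hab
        have := e.injective (Subtype.ext hab)
        exact Subtype.mk_eq_mk.mp this
      · intro a ha
        simp only [dif_pos ha]
        exact (e ⟨a, ha⟩).2
  choose g hg1 hg2 using claim
  set f : S → S := fun a => if a ∈ Timp P μ μ' then g (colOf a) a else a with hf
  have hmemA : ∀ a ∈ Timp P μ μ', a ∈ Ac (colOf a) := fun a ha =>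
    hAmem.mpr ⟨ha, hcolOf a ha⟩
  have hstep : ∀ a ∈ Timp P μ μ', f a ∈ Bc (colOf a) := by
    intro a ha
    rw [hf]; simp only [if_pos ha]
    exact hg2 _ _ (hmemA a ha)
  have hstepT : ∀ a ∈ Timp P μ μ', f a ∈ Timp P μ μ' := by
    intro a ha
    have hb := hstep a ha
    rw [hBc] at hb
    obtain ⟨hb1, hb2⟩ := Finset.mem_sdiff.mp hb
    exact B_mem_Timp hμ hμ' ha (hcolOf a ha) hb1 hb2
  have hfinj : ∀ a b, a ∈ Timp P μ μ' → b ∈ Timp P μ μ' → f a = f b → a = b := by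
    intro a b ha hb hab
    have hfa := hstep a ha
    have hfb := hstep b hb
    rw [hBc] at hfa hfb
    have h1 : μ (f a) = some (colOf a) := mem_assignedSet.mp (Finset.mem_sdiff.mp hfa).1
    have h2 : μ (f b) = some (colOf b) := mem_assignedSet.mp (Finset.mem_sdiff.mp hfb).1
    rw [hab, h2] at h1
    have hcc : colOf b = colOf a := Option.some_inj.mp h1
    have ha' : a ∈ Ac (colOf a) := hmemA a ha
    have hb' : b ∈ Ac (colOf a) := by rw [← hcc]; exact hmemA b hb
    apply hg1 (colOf a) (Finset.mem_coe.mpr ha') (Finset.mem_coe.mpr hb')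
    rw [hf] at hab
    simp only [if_pos ha, if_pos hb] at hab
    rw [hab, hcc]
  set seq : ℕ → S := fun n => f^[n] s with hseq
  have hseqsucc : ∀ n, seq (n + 1) = f (seq n) := by
    intro n; rw [hseq]; exact Function.iterate_succ_apply' f n s
  have hseqT : ∀ n, seq n ∈ Timp P μ μ' := by
    intro n; induction n with
    | zero => exact hs
    | succ n ih => rw [hseqsucc]; exact hstepT _ ih
  have hsub : ∀ i j, seq i = seq (i + j) → seq 0 = seq j := by
    intro i
    induction i with
    | zero => intro j hj; simpa using hj
    | succ i ih =>
      intro j hj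
      apply ih
      have : seq (i + 1 + j) = seq ((i + j) + 1) := by ring_nf
      rw [this, hseqsucc, hseqsucc] at hj
      exact hfinj _ _ (hseqT i) (hseqT (i + j)) hj
  have hex : ∃ m, 0 < m ∧ seq m = seq 0 := by
    obtain ⟨x, y, hne, hxy⟩ := Fintype.exists_ne_map_eq_of_card_lt
      (fun i : Fin (Fintype.card S + 1) => seq i) (by simp)
    rcases lt_or_gt_of_ne (fun h => hne (Fin.ext h)) with hlt | hgt
    · exact ⟨y - x, by omega, by
        have := hsub x (y - x) (by rw [Nat.add_sub_cancel' (le_of_lt hlt)]; exact hxy)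
        exact this.symm⟩
    · exact ⟨x - y, by omega, by
        have := hsub y (x - y) (by rw [Nat.add_sub_cancel' (le_of_lt hgt)]; exact hxy.symm)
        exact this.symm⟩
  set p := Nat.find hex with hp
  obtain ⟨hppos, hpfix⟩ := Nat.find_spec hex
  refine ⟨p, seq, fun n => colOf (seq n), hppos, ?_, ?_, ?_, ?_, hseqT, rfl⟩
  · intro n
    have h0 : seq p = seq 0 := hpfix
    show f^[n + p] s = f^[n] s
    rw [Function.iterate_add_apply]
    exact congrArg _ h0
  · intro a b hap hbp hab
    rcases Nat.lt_or_ge a b with hlt | hge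
    · exfalso
      have := hsub a (b - a) (by rw [Nat.add_sub_cancel' (le_of_lt hlt)]; exact hab)
      have hlt2 : b - a < p := by omega
      exact Nat.find_min hex hlt2 ⟨by omega, this.symm⟩
    · rcases Nat.lt_or_ge b a with hlt' | hge'
      · exfalso
        have := hsub b (a - b) (by rw [Nat.add_sub_cancel' (le_of_lt hlt')]; exact hab.symm)
        have hlt2 : a - b < p := by omega
        exact Nat.find_min hex hlt2 ⟨by omega, this.symm⟩
      · omega
  · intro n
    rw [hseqsucc]
    have hb := hstep _ (hseqT n)
    rw [hBc] at hb
    exact mem_assignedSet.mp (Finset.mem_sdiff.mp hb).1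
  · intro n
    exact hcolOf _ (hseqT n)

end Aux3

section Aux4
variable {P : MPrefs S C} {μ μ' : S → Option C} {q : C → ℕ}

lemma build_cycle (hμ : MStable P q μ) (hμ' : MStable P q μ') :
    ∀ p : ℕ, 0 < p → ∀ (ss : ℕ → S) (cs : ℕ → C),
    (∀ n, ss (n + p) = ss n) →
    (∀ a b, a < p → b < p → ss a = ss b → a = b) →
    (∀ n, μ (ss (n + 1)) = some (cs n)) →
    (∀ n, μ' (ss n) = some (cs n)) →
    (∀ n, ss n ∈ Timp P μ μ') →
    ∃ (k : ℕ) (sf : Fin (k + 1) → S) (cf : Fin (k + 1) → C),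
      Function.Injective sf ∧ Function.Injective cf ∧
      (∀ i, P.prS (sf i) (some (cf (i - 1))) < P.prS (sf i) (some (cf i))) ∧
      (∀ i, P.prC (cf i) (some (sf i)) < P.prC (cf i) (some (sf (i + 1)))) ∧
      (∃ i, sf i = ss 0) ∧
      (∀ i, μ (sf i) = some (cf (i - 1))) ∧
      (∀ i, μ' (sf i) = some (cf i)) ∧
      (∀ i, (assignedSet μ (cf i)).card = q (cf i) ∧
            (assignedSet μ' (cf i)).card = q (cf i)) := by
  intro p
  induction p using Nat.strong_induction_on with
  | _ p IH =>
  intro hp ss cs hper hinj h1 h2 hT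
  by_cases hcs : ∀ a b, a < p → b < p → cs a = cs b → a = b
  · -- colleges distinct: build the Fin cycle
    obtain ⟨k, rfl⟩ : ∃ k, p = k + 1 := ⟨p - 1, by omega⟩
    have h6 : ∀ i : Fin (k+1), μ (ss i.val) = some (cs ((i - 1 : Fin (k+1)) : ℕ)) := by
      intro i
      have hval : ((i - 1 : Fin (k + 1)) : ℕ) = if i = 0 then k else (i : ℕ) - 1 :=
        Fin.coe_sub_one i
      by_cases h0 : i = 0
      · subst h0
        rw [hval, if_pos rfl]
        simp only [Fin.val_zero]
        have hss : ss 0 = ss (k + 1) := by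
          have := hper 0; simpa using this.symm
        rw [hss]; exact h1 k
      · rw [hval, if_neg h0]
        have hpos : 1 ≤ (i : ℕ) := by
          rcases Nat.eq_zero_or_pos (i : ℕ) with h | h
          · exact absurd (Fin.ext h) h0
          · exact h
        have heq : (i : ℕ) = ((i : ℕ) - 1) + 1 := by omega
        rw [heq]; exact h1 _
    refine ⟨k, fun i => ss i.val, fun i => cs i.val, ?_, ?_, ?_, ?_, ⟨0, rfl⟩, h6, ?_, ?_⟩
    · intro i j hij
      exact Fin.ext (hinj i.val j.val i.isLt j.isLt hij)
    · intro i j hij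
      exact Fin.ext (hcs i.val j.val i.isLt j.isLt hij)
    · intro i
      have := mem_Timp.mp (hT i.val)
      rw [h6 i, h2 i.val] at this
      exact this
    · intro i
      have hfp := full_and_pref hμ hμ' (hT i.val) (h2 i.val)
      apply hfp.2
      apply mem_assignedSet.mpr
      have hval : (((i + 1 : Fin (k+1)) - 1 : Fin (k + 1)) : ℕ) = (i : ℕ) := by
        rw [add_sub_cancel_right]
      have := h6 (i + 1)
      rw [hval] at this
      exact this
    · intro i; exact h2 i.val
    · intro i
      have hR : cs i.val ∈ Rset P μ μ' := mem_Rset.mpr ⟨ss i.val, hT i.val, h2 i.val⟩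
      exact ⟨(full_and_pref hμ hμ' (hT i.val) (h2 i.val)).1, mu'_full hμ hμ' hR⟩
  · -- duplicate colleges: shrink the cycle
    push_neg at hcs
    obtain ⟨a, b, ha, hb, hab, hne⟩ := hcs
    have key : ∀ a b, a < b → b < p → cs a = cs b →
        ∃ (k : ℕ) (sf : Fin (k + 1) → S) (cf : Fin (k + 1) → C),
          Function.Injective sf ∧ Function.Injective cf ∧
          (∀ i, P.prS (sf i) (some (cf (i - 1))) < P.prS (sf i) (some (cf i))) ∧
          (∀ i, P.prC (cf i) (some (sf i)) < P.prC (cf i) (some (sf (i + 1)))) ∧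
          (∃ i, sf i = ss 0) ∧
          (∀ i, μ (sf i) = some (cf (i - 1))) ∧
          (∀ i, μ' (sf i) = some (cf i)) ∧
          (∀ i, (assignedSet μ (cf i)).card = q (cf i) ∧
                (assignedSet μ' (cf i)).card = q (cf i)) := by
      intro a b hlt hbp hdup
      set p' : ℕ := p - (b - a) with hp'def
      have hap : a < p := by omega
      have hp'pos : 0 < p' := by omega
      have hp'lt : p' < p := by omega
      set g : ℕ → ℕ := fun m => if m % p' ≤ a then m % p' else m % p' + (b - a) with hg
      have hgper : ∀ n, g (n + p') = g n := by
        intro n; simp only [hg, Nat.add_mod_right]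
      have hmod : ∀ n, n < p' → n % p' = n := fun n hn => Nat.mod_eq_of_lt hn
      have hrange : ∀ n, g n < p := by
        intro n
        have hm : n % p' < p' := Nat.mod_lt _ hp'pos
        simp only [hg]
        split_ifs <;> omega
      have hgsmall : ∀ n, n < p' → g n = if n ≤ a then n else n + (b - a) := by
        intro n hn; simp only [hg, hmod n hn]
      have hg0 : g 0 = 0 := by
        simp only [hg]
        rw [Nat.zero_mod, if_pos (Nat.zero_le a)]
      have happly := IH p' hp'lt hp'pos (fun m => ss (g m)) (fun m => cs (g m))
        (fun n => congrArg ss (hgper n)) ?_ ?_ (fun n => h2 (g n)) (fun n => hT (g n))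
      · obtain ⟨k, sf, cf, r1, r2, r3, r4, ⟨i0, hi0⟩, r6, r7, r8⟩ := happly
        exact ⟨k, sf, cf, r1, r2, r3, r4, ⟨i0, hi0.trans (congrArg ss hg0)⟩, r6, r7, r8⟩
      · -- injectivity
        intro x y hx hy hxy
        have := hinj _ _ (hrange x) (hrange y) hxy
        rw [hgsmall x hx, hgsmall y hy] at this
        split_ifs at this <;> omega
      · -- matching condition μ (ss' (n+1)) = some (cs' n)
        intro n
        show μ (ss (g (n + 1))) = some (cs (g n))
        have hm : n % p' < p' := Nat.mod_lt _ hp'pos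
        have hsucc : (n + 1) % p' = (n % p' + 1) % p' := by
          conv_lhs => rw [Nat.add_mod]
          conv_rhs => rw [Nat.add_mod]
          rw [Nat.mod_mod_of_dvd _ dvd_rfl]
        set m := n % p' with hmdef
        have hgn : g n = if m ≤ a then m else m + (b - a) := by simp only [hg]; rfl
        by_cases hend : m + 1 = p'
        · have h01 : (n + 1) % p' = 0 := by rw [hsucc, hend, Nat.mod_self]
          have hg1' : g (n + 1) = 0 := by
            simp only [hg]
            rw [h01, if_pos (Nat.zero_le a)]
          rw [hg1']
          have hss0 : ss 0 = ss p := by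
            have := hper 0; simpa using this.symm
          have hp1 : μ (ss p) = some (cs (p - 1)) := by
            have := h1 (p - 1); rwa [show p - 1 + 1 = p by omega] at this
          rw [hss0, hp1]
          by_cases hma : m ≤ a
          · have hma' : m = a := by omega
            have hb' : b = p - 1 := by omega
            have hgna : g n = a := by rw [hgn, if_pos hma, hma']
            rw [hgna, hdup, hb']
          · have hgnb : g n = p - 1 := by rw [hgn, if_neg hma]; omega
            rw [hgnb]
        · have h01 : (n + 1) % p' = m + 1 := by
            rw [hsucc]; exact Nat.mod_eq_of_lt (by omega)
          have hgn1 : g (n + 1) = if m + 1 ≤ a then m + 1 else m + 1 + (b - a) := by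
            simp only [hg]; rw [h01]
          by_cases hma : m + 1 ≤ a
          · rw [hgn1, if_pos hma, hgn, if_pos (by omega)]
            exact h1 m
          · by_cases hma2 : m ≤ a
            · have hma' : m = a := by omega
              rw [hgn1, if_neg hma, hgn, if_pos hma2, hma']
              have hq : a + 1 + (b - a) = b + 1 := by omega
              rw [hq, hdup]
              exact h1 b
            · rw [hgn1, if_neg hma, hgn, if_neg hma2]
              have hq : m + 1 + (b - a) = (m + (b - a)) + 1 := by omega
              rw [hq]
              exact h1 _
    rcases hne.lt_or_gt with h | h
    · exact key a b h hb hab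
    · exact key b a h ha hab.symm

end Aux4


/-- **Lemma 3.** If μ, μ' are stable many-to-one matchings and student s strictly
prefers μ'(s) to μ(s), then s lies on a preference cycle s₀c₀s₁c₁…s_k c_k s₀
(all agents distinct, each preferring its successor to its predecessor) which is
(S,μ)-dominated and (S,μ')-dominating, and every college on the cycle is filled
to full capacity in both μ and μ'. -/
theorem stmt7 (P : MPrefs S C) (q : C → ℕ) (μ μ' : S → Option C)
    (hμ : MStable P q μ) (hμ' : MStable P q μ')
    (s : S) (h : P.prS s (μ s) < P.prS s (μ' s)) :
    ∃ (k : ℕ) (ss : Fin (k + 1) → S) (cs : Fin (k + 1) → C),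
      Function.Injective ss ∧ Function.Injective cs ∧
      (∀ i, P.prS (ss i) (some (cs (i - 1))) < P.prS (ss i) (some (cs i))) ∧
      (∀ i, P.prC (cs i) (some (ss i)) < P.prC (cs i) (some (ss (i + 1)))) ∧
      (∃ i, ss i = s) ∧
      (∀ i, μ (ss i) = some (cs (i - 1))) ∧
      (∀ i, μ' (ss i) = some (cs i)) ∧
      (∀ i, (assignedSet μ (cs i)).card = q (cs i) ∧
            (assignedSet μ' (cs i)).card = q (cs i)) := by
  have hsT : s ∈ Timp P μ μ' := mem_Timp.mpr h
  obtain ⟨p, ss, cs, hp, hper, hinj, h1, h2, hT, hs0⟩ := exists_cycle hμ hμ' hsT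
  obtain ⟨k, sf, cf, r1, r2, r3, r4, ⟨i0, hi0⟩, r6, r7, r8⟩ :=
    build_cycle hμ hμ' p hp ss cs hper hinj h1 h2 hT
  exact ⟨k, sf, cf, r1, r2, r3, r4, ⟨i0, by rw [hi0, hs0]⟩, r6, r7, r8⟩
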